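/- Suppose condition (I⁰_ρ) holds for some ρ > 0: there exists a finite positive Borel measure dA^ρ on [0,1], with α^ρ[u] := ∫₀¹ u(t) dA^ρ(t) and 𝒦^ρ(s) := ∫₀¹ k(t,s) dA^ρ(t), such that α^ρ[γ] < 1, H[u] ≥ α^ρ[u] for every u ∈ K with min_{t∈[a,b]} u(t) = ρ, and f_{ρ,ρ/c} · inf_{t∈[a,b]} { γ(t)/(1−α^ρ[γ]) · ∫_a^b 𝒦^ρ(s) g(s) ds + ∫_a^b k(t,s) g(s) ds } > 1, where f_{ρ,ρ/c} := ess inf { f(t,u)/ρ : t ∈ [a,b], ρ ≤ u ≤ ρ/c }. Then for every u ∈ K with min_{t∈[a,b]} u(t) = ρ and every real λ ≥ 0 one has u ≠ Tu + λ·𝟙, where 𝟙 denotes the constant function equal to 1 on [0,1]. -/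

import Mathlib

open MeasureTheory Set

/-- Supremum norm of `u` on `[0,1]`. -/
noncomputable def nrm (u : ℝ → ℝ) : ℝ := sSup ((fun t => |u t|) '' Icc (0:ℝ) 1)

/-- Minimum (infimum) of `u` on `[a,b]`. -/
noncomputable def minOnAB (u : ℝ → ℝ) (a b : ℝ) : ℝ := sInf (u '' Icc a b)

/-- The perturbed Hammerstein operator `Tu(t) = γ(t)H[u] + ∫₀¹ k(t,s)g(s)f(s,u(s)) ds`. -/
noncomputable def Tham (k : ℝ → ℝ → ℝ) (g : ℝ → ℝ) (f : ℝ → ℝ → ℝ) (γ : ℝ → ℝ)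
    (H : (ℝ → ℝ) → ℝ) (u : ℝ → ℝ) (t : ℝ) : ℝ :=
  γ t * H u + ∫ s in (0:ℝ)..1, k t s * g s * f s (u s)

/-- Condition (I⁰_ρ) localized on `[a,b]`. -/
def CondI0B (k : ℝ → ℝ → ℝ) (g : ℝ → ℝ) (f : ℝ → ℝ → ℝ) (γ : ℝ → ℝ)
    (H : (ℝ → ℝ) → ℝ) (K : Set (ℝ → ℝ)) (a b c ρ : ℝ) : Prop :=
  ∃ μA : Measure ℝ, IsFiniteMeasure μA ∧ μA ((Icc (0:ℝ) 1)ᶜ) = 0 ∧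
    (∫ t, γ t ∂μA) < 1 ∧
    (∀ u ∈ K, minOnAB u a b = ρ → (∫ t, u t ∂μA) ≤ H u) ∧
    ∃ fb : ℝ,
      (∀ᵐ t ∂(volume.restrict (Icc a b)), ∀ u : ℝ, ρ ≤ u → u ≤ ρ / c → fb * ρ ≤ f t u) ∧
      1 < fb * sInf ((fun t => γ t / (1 - ∫ t', γ t' ∂μA) *
          (∫ s in a..b, (∫ t', k t' s ∂μA) * g s) +
          ∫ s in a..b, k t s * g s) '' Icc a b)

theorem stmt4
    (k : ℝ → ℝ → ℝ) (g : ℝ → ℝ) (f : ℝ → ℝ → ℝ) (Φ γ : ℝ → ℝ) (a b c₁ c₂ c : ℝ)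
    (H : (ℝ → ℝ) → ℝ) (K : Set (ℝ → ℝ))
    (hk_meas : Measurable (Function.uncurry k))
    (hk_nonneg : ∀ t ∈ Icc (0:ℝ) 1, ∀ s ∈ Icc (0:ℝ) 1, 0 ≤ k t s)
    (hk_cont : ∀ τ ∈ Icc (0:ℝ) 1, ∀ᵐ s ∂(volume.restrict (Icc (0:ℝ) 1)),
      Filter.Tendsto (fun t => |k t s - k τ s|) (nhdsWithin τ (Icc (0:ℝ) 1)) (nhds 0))
    (ha : 0 ≤ a) (hab : a ≤ b) (hb : b ≤ 1)
    (hΦ_meas : Measurable Φ)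
    (hΦ_bdd : ∃ C, ∀ᵐ s ∂(volume.restrict (Icc (0:ℝ) 1)), |Φ s| ≤ C)
    (hc₁ : c₁ ∈ Ioc (0:ℝ) 1)
    (hkΦ_up : ∀ t ∈ Icc (0:ℝ) 1, ∀ᵐ s ∂(volume.restrict (Icc (0:ℝ) 1)), k t s ≤ Φ s)
    (hkΦ_low : ∀ t ∈ Icc a b, ∀ᵐ s ∂(volume.restrict (Icc (0:ℝ) 1)), c₁ * Φ s ≤ k t s)
    (hg_meas : Measurable g)
    (hg_nonneg : ∀ᵐ s ∂(volume.restrict (Icc (0:ℝ) 1)), 0 ≤ g s)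
    (hgΦ_int : IntegrableOn (fun s => g s * Φ s) (Icc (0:ℝ) 1))
    (hΦg_pos : 0 < ∫ s in a..b, Φ s * g s)
    (hf_meas : ∀ u : ℝ, Measurable (fun t => f t u))
    (hf_cont : ∀ᵐ t ∂(volume.restrict (Icc (0:ℝ) 1)), ContinuousOn (f t) (Ici 0))
    (hf_nonneg : ∀ t u : ℝ, 0 ≤ u → 0 ≤ f t u)
    (hf_bdd : ∀ r > 0, ∃ C, ∀ᵐ t ∂(volume.restrict (Icc (0:ℝ) 1)), ∀ u ∈ Icc (0:ℝ) r, f t u ≤ C)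
    (hγ_cont : ContinuousOn γ (Icc (0:ℝ) 1))
    (hγ_nonneg : ∀ t ∈ Icc (0:ℝ) 1, 0 ≤ γ t)
    (hc₂ : c₂ ∈ Ioc (0:ℝ) 1)
    (hγ_low : ∀ t ∈ Icc a b, c₂ * nrm γ ≤ γ t)
    (hc : c = min c₁ c₂)
    (hK : K = {u : ℝ → ℝ | ContinuousOn u (Icc (0:ℝ) 1) ∧
      (∀ t ∈ Icc (0:ℝ) 1, 0 ≤ u t) ∧ c * nrm u ≤ minOnAB u a b})
    (hH_nonneg : ∀ u ∈ K, 0 ≤ H u)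
    (hH_cont : ∀ u ∈ K, ∀ ε > 0, ∃ δ > 0, ∀ v ∈ K,
      nrm (fun t => u t - v t) < δ → |H u - H v| < ε)
    (hH_bdd : ∀ M : ℝ, ∃ M', ∀ u ∈ K, nrm u ≤ M → H u ≤ M')
    (ρ : ℝ) (hρ : 0 < ρ) (hI0 : CondI0B k g f γ H K a b c ρ) :
    ∀ u ∈ K, minOnAB u a b = ρ → ∀ lam : ℝ, 0 ≤ lam →
      ¬ (∀ t ∈ Icc (0:ℝ) 1, u t = Tham k g f γ H u t + lam) := by
  intro u huK hmin lam hlam heq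
  have hc_pos : 0 < c := by rw [hc]; exact lt_min hc₁.1 hc₂.1
  obtain ⟨μA, hfin, hnull, hαγ, hHge, fb, hfb, hsinf⟩ := hI0
  haveI : IsFiniteMeasure μA := hfin
  have hae01 : ∀ᵐ t ∂μA, t ∈ Icc (0:ℝ) 1 := by
    rw [MeasureTheory.ae_iff]
    exact hnull
  have huK' := huK
  rw [hK] at huK'
  obtain ⟨hu_cont, hu_nonneg, hu_min⟩ := huK'
  -- basic inclusions
  have hab01 : Icc a b ⊆ Icc (0:ℝ) 1 := Icc_subset_Icc ha hb
  have hIoc01 : Ioc (0:ℝ) 1 ⊆ Icc (0:ℝ) 1 := Ioc_subset_Icc_self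
  have hIocab : Ioc a b ⊆ Ioc (0:ℝ) 1 := Ioc_subset_Ioc ha hb
  have hIocab01 : Ioc a b ⊆ Icc (0:ℝ) 1 := fun x hx => hab01 (Ioc_subset_Icc_self hx)
  -- bounds on u
  have hu_le : ∀ s ∈ Icc (0:ℝ) 1, u s ≤ nrm u := by
    intro s hs
    have hb1 : BddAbove ((fun t => |u t|) '' Icc (0:ℝ) 1) :=
      (isCompact_Icc.image_of_continuousOn (continuous_abs.comp_continuousOn hu_cont)).bddAbove
    exact (le_abs_self _).trans (le_csSup hb1 ⟨s, hs, rfl⟩)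
  have hmin_le : ∀ s ∈ Icc a b, ρ ≤ u s := by
    intro s hs
    have hb2 : BddBelow (u '' Icc a b) :=
      (isCompact_Icc.image_of_continuousOn (hu_cont.mono hab01)).bddBelow
    calc ρ = minOnAB u a b := hmin.symm
    _ ≤ u s := csInf_le hb2 ⟨s, hs, rfl⟩
  have hnrm_le : nrm u ≤ ρ / c := by
    rw [le_div_iff₀ hc_pos]
    calc nrm u * c = c * nrm u := mul_comm _ _
    _ ≤ minOnAB u a b := hu_min
    _ = ρ := hmin
  have hu_ub : ∀ s ∈ Icc (0:ℝ) 1, u s ≤ ρ / c := fun s hs => (hu_le s hs).trans hnrm_le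
  -- abbreviations
  set αγ : ℝ := ∫ t, γ t ∂μA with hαγdef
  set S1 : ℝ := ∫ s in a..b, (∫ t', k t' s ∂μA) * g s with hS1def
  set Eimg : Set ℝ := (fun t => γ t / (1 - αγ) * S1 + ∫ s in a..b, k t s * g s) '' Icc a b
    with hEimgdef
  -- nonnegativity facts
  have hαγ_nonneg : 0 ≤ αγ := integral_nonneg_of_ae (hae01.mono fun t ht => hγ_nonneg t ht)
  have h1αγ : 0 < 1 - αγ := by linarith
  have hKf_nonneg : ∀ s ∈ Icc (0:ℝ) 1, 0 ≤ ∫ t', k t' s ∂μA := fun s hs =>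
    integral_nonneg_of_ae (hae01.mono fun t ht => hk_nonneg t ht s hs)
  have hg_nonneg_ab : ∀ᵐ s ∂(volume.restrict (Ioc a b)), 0 ≤ g s :=
    ae_restrict_of_ae_restrict_of_subset hIocab01 hg_nonneg
  have hS1_nonneg : 0 ≤ S1 := by
    rw [hS1def, intervalIntegral.integral_of_le hab]
    refine integral_nonneg_of_ae ?_
    filter_upwards [hg_nonneg_ab, ae_restrict_mem measurableSet_Ioc] with s hg hs
    exact mul_nonneg (hKf_nonneg s (hIocab01 hs)) hg
  have hB_nonneg : ∀ t ∈ Icc (0:ℝ) 1, 0 ≤ ∫ s in a..b, k t s * g s := by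
    intro t ht
    rw [intervalIntegral.integral_of_le hab]
    refine integral_nonneg_of_ae ?_
    filter_upwards [hg_nonneg_ab, ae_restrict_mem measurableSet_Ioc] with s hg hs
    exact mul_nonneg (hk_nonneg t ht s (hIocab01 hs)) hg
  have hEimg_lb : ∀ x ∈ Eimg, (0:ℝ) ≤ x := by
    rintro x ⟨t, ht, rfl⟩
    have h2 := hB_nonneg t (hab01 ht)
    have h1 : 0 ≤ γ t / (1 - αγ) * S1 :=
      mul_nonneg (div_nonneg (hγ_nonneg t (hab01 ht)) h1αγ.le) hS1_nonneg
    exact add_nonneg h1 h2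
  have hEne : Eimg.Nonempty := ⟨_, mem_image_of_mem _ (left_mem_Icc.mpr hab)⟩
  have hsinf_nonneg : 0 ≤ sInf Eimg := le_csInf hEne hEimg_lb
  have hfb_pos : 0 < fb := by
    by_contra h
    push_neg at h
    have h2 := mul_le_mul_of_nonneg_right h hsinf_nonneg
    rw [zero_mul] at h2
    linarith
  have hfρ : 0 ≤ fb * ρ := (mul_pos hfb_pos hρ).le
  -- bound on f
  obtain ⟨Cf0, hCf0⟩ := hf_bdd (ρ / c) (div_pos hρ hc_pos)
  set Cf : ℝ := max Cf0 0 with hCfdef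
  have hCf_nonneg : 0 ≤ Cf := le_max_right _ _
  have hCf : ∀ᵐ t ∂(volume.restrict (Icc (0:ℝ) 1)), ∀ x ∈ Icc (0:ℝ) (ρ/c), f t x ≤ Cf :=
    hCf0.mono fun t ht x hx => (ht x hx).trans (le_max_left _ _)
  -- a measurable Carathéodory version of f
  obtain ⟨E, hE_meas, hE_ae, hE_cont⟩ : ∃ E : Set ℝ, MeasurableSet E ∧
      (∀ᵐ t ∂(volume.restrict (Icc (0:ℝ) 1)), t ∈ E) ∧
      ∀ t ∈ E, ContinuousOn (f t) (Ici 0) := by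
    refine ⟨(toMeasurable (volume.restrict (Icc (0:ℝ) 1))
        {t | ¬ ContinuousOn (f t) (Ici 0)})ᶜ, (measurableSet_toMeasurable _ _).compl, ?_, ?_⟩
    · have hnull2 : volume.restrict (Icc (0:ℝ) 1)
          (toMeasurable (volume.restrict (Icc (0:ℝ) 1))
            {t | ¬ ContinuousOn (f t) (Ici 0)}) = 0 := by
        rw [measure_toMeasurable]
        exact ae_iff.mp hf_cont
      rw [ae_iff]
      simpa only [Set.mem_compl_iff, not_not, Set.setOf_mem_eq] using hnull2
    · intro t ht
      by_contra hcont
      exact ht (subset_toMeasurable _ _ hcont)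
  set ftil : ℝ → ℝ → ℝ := fun t x => E.indicator (fun t' => f t' |x|) t with hftil
  have hftil_contx : ∀ t, Continuous fun x => ftil t x := by
    intro t
    by_cases ht : t ∈ E
    · simp only [hftil, Set.indicator_of_mem ht]
      exact (hE_cont t ht).comp_continuous continuous_abs fun x => abs_nonneg x
    · simp only [hftil, Set.indicator_of_notMem ht]
      exact continuous_const
  have hftil_meast : ∀ x, Measurable fun t => ftil t x := by
    intro x
    simp only [hftil]
    exact (hf_meas |x|).indicator hE_meas
  have hftil_joint : Measurable fun p : ℝ × ℝ => ftil p.2 p.1 :=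
    measurable_uncurry_of_continuous_of_measurable hftil_contx hftil_meast
  have hu_aem : AEMeasurable u (volume.restrict (Icc (0:ℝ) 1)) :=
    hu_cont.aemeasurable measurableSet_Icc
  set u' : ℝ → ℝ := hu_aem.mk u with hu'def
  have hu'_meas : Measurable u' := hu_aem.measurable_mk
  have hu'_eq : u =ᵐ[volume.restrict (Icc (0:ℝ) 1)] u' := hu_aem.ae_eq_mk
  set W : ℝ → ℝ := fun s => g s * ftil s (u' s) with hWdef
  have hW_meas : Measurable W :=
    hg_meas.mul (hftil_joint.comp (hu'_meas.prodMk measurable_id))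
  have hW_eq : ∀ᵐ s ∂(volume.restrict (Icc (0:ℝ) 1)), W s = g s * f s (u s) := by
    filter_upwards [hE_ae, hu'_eq, ae_restrict_mem measurableSet_Icc] with s hsE hsu hs01
    have h1 : ftil s (u' s) = f s (u s) := by
      simp only [hftil, Set.indicator_of_mem hsE]
      rw [← hsu, abs_of_nonneg (hu_nonneg s hs01)]
    simp only [hWdef]
    rw [h1]
  have hW_nonneg : ∀ᵐ s ∂(volume.restrict (Icc (0:ℝ) 1)), 0 ≤ W s := by
    filter_upwards [hW_eq, hg_nonneg, ae_restrict_mem measurableSet_Icc] with s he hg hs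
    rw [he]
    exact mul_nonneg hg (hf_nonneg s (u s) (hu_nonneg s hs))
  have hW_ub : ∀ᵐ s ∂(volume.restrict (Icc (0:ℝ) 1)), W s ≤ Cf * g s := by
    filter_upwards [hW_eq, hCf, hg_nonneg, ae_restrict_mem measurableSet_Icc] with s he hC hg hs
    rw [he]
    calc g s * f s (u s) ≤ g s * Cf :=
          mul_le_mul_of_nonneg_left (hC (u s) ⟨hu_nonneg s hs, hu_ub s hs⟩) hg
    _ = Cf * g s := mul_comm _ _
  -- the dominating function
  have hD_int01 : IntegrableOn (fun s => Cf * (g s * Φ s)) (Icc (0:ℝ) 1) := hgΦ_int.const_mul Cf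
  have hD_intIoc : IntegrableOn (fun s => Cf * (g s * Φ s)) (Ioc (0:ℝ) 1) :=
    hD_int01.mono_set hIoc01
  have hΦ_nonneg : ∀ᵐ s ∂(volume.restrict (Icc (0:ℝ) 1)), 0 ≤ Φ s := by
    filter_upwards [hkΦ_up 0 (left_mem_Icc.mpr zero_le_one), ae_restrict_mem measurableSet_Icc]
      with s h hs
    exact (hk_nonneg 0 (left_mem_Icc.mpr zero_le_one) s hs).trans h
  have hD_nonnegIoc : 0 ≤ᵐ[volume.restrict (Ioc (0:ℝ) 1)] fun s => Cf * (g s * Φ s) := by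
    filter_upwards [ae_restrict_of_ae_restrict_of_subset hIoc01 hg_nonneg,
      ae_restrict_of_ae_restrict_of_subset hIoc01 hΦ_nonneg] with s hg hΦ
    exact mul_nonneg hCf_nonneg (mul_nonneg hg hΦ)
  have hdom_ae : ∀ t ∈ Icc (0:ℝ) 1, ∀ᵐ s ∂(volume.restrict (Ioc (0:ℝ) 1)),
      ‖k t s * W s‖ ≤ Cf * (g s * Φ s) := by
    intro t ht
    filter_upwards [ae_restrict_of_ae_restrict_of_subset hIoc01 (hkΦ_up t ht),
      ae_restrict_of_ae_restrict_of_subset hIoc01 hW_nonneg,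
      ae_restrict_of_ae_restrict_of_subset hIoc01 hW_ub,
      ae_restrict_of_ae_restrict_of_subset hIoc01 hg_nonneg,
      ae_restrict_mem measurableSet_Ioc] with s hk hW0 hWu hg hs
    have hk0 : 0 ≤ k t s := hk_nonneg t ht s (hIoc01 hs)
    have hΦ0 : 0 ≤ Φ s := hk0.trans hk
    calc ‖k t s * W s‖ = k t s * W s := Real.norm_of_nonneg (mul_nonneg hk0 hW0)
    _ ≤ Φ s * (Cf * g s) := mul_le_mul hk hWu hW0 hΦ0
    _ = Cf * (g s * Φ s) := by ring
  have hslice : ∀ t ∈ Icc (0:ℝ) 1, IntegrableOn (fun s => k t s * W s) (Ioc (0:ℝ) 1) := by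
    intro t ht
    refine Integrable.mono hD_intIoc
      (((hk_meas.comp (measurable_const.prodMk measurable_id)).mul
        hW_meas).aestronglyMeasurable) ?_
    filter_upwards [hdom_ae t ht] with s hs
    exact hs.trans (le_abs_self _)
  set M : ℝ := ∫ s in Ioc (0:ℝ) 1, Cf * (g s * Φ s) with hMdef
  set J : ℝ → ℝ := fun t => ∫ s in Ioc (0:ℝ) 1, k t s * W s with hJdef
  have hJ_bdd : ∀ t ∈ Icc (0:ℝ) 1, ‖J t‖ ≤ M := by
    intro t ht
    exact norm_integral_le_of_norm_le hD_intIoc (hdom_ae t ht)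
  have hFjoint : Measurable fun p : ℝ × ℝ => k p.1 p.2 * W p.2 :=
    hk_meas.mul (hW_meas.comp measurable_snd)
  have hJ_sm : StronglyMeasurable J :=
    (hFjoint.stronglyMeasurable).integral_prod_right'
  have hJ_int : Integrable J μA :=
    ⟨hJ_sm.aestronglyMeasurable,
      HasFiniteIntegral.of_bounded (C := M) (hae01.mono fun t ht => hJ_bdd t ht)⟩
  -- rewrite the fixed point equation
  have heq' : ∀ t ∈ Icc (0:ℝ) 1, u t = γ t * H u + J t + lam := by
    intro t ht
    have h1 := heq t ht
    rw [Tham] at h1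
    have h2 : (∫ s in (0:ℝ)..1, k t s * g s * f s (u s)) = J t := by
      rw [hJdef, intervalIntegral.integral_of_le zero_le_one]
      refine integral_congr_ae ?_
      filter_upwards [ae_restrict_of_ae_restrict_of_subset hIoc01 hW_eq] with s hs
      rw [mul_assoc, ← hs]
    rw [h2] at h1
    exact h1
  -- integrate against μA
  have hrestr : μA.restrict (Icc (0:ℝ) 1) = μA := Measure.restrict_eq_self_of_ae_mem hae01
  have hγ_int : Integrable γ μA := by
    rw [← hrestr]
    exact hγ_cont.integrableOn_compact isCompact_Icc
  have hαu := hHge u huK hmin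
  have hsplit : ∫ t, u t ∂μA = αγ * H u + (∫ t, J t ∂μA) + lam * (μA univ).toReal := by
    have h1 : ∫ t, u t ∂μA = ∫ t, (γ t * H u + J t + lam) ∂μA :=
      integral_congr_ae (hae01.mono fun t ht => heq' t ht)
    have h2 : Integrable (fun t => γ t * H u) μA := hγ_int.mul_const _
    have h4 : ∫ t, (γ t * H u + J t + lam) ∂μA
        = (∫ t, (γ t * H u + J t) ∂μA) + ∫ _t, lam ∂μA :=
      integral_add (h2.add hJ_int) (integrable_const lam)
    have h5 : ∫ t, (γ t * H u + J t) ∂μA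
        = (∫ t, γ t * H u ∂μA) + ∫ t, J t ∂μA := integral_add h2 hJ_int
    have h6 : ∫ t, γ t * H u ∂μA = (∫ t, γ t ∂μA) * H u := integral_mul_const _ _
    rw [h1, h4, h5, h6, integral_const, smul_eq_mul, hαγdef, Measure.real]
    ring
  have hJint_le : (∫ t, J t ∂μA) ≤ (1 - αγ) * H u := by
    have hlam' : 0 ≤ lam * (μA univ).toReal := mul_nonneg hlam ENNReal.toReal_nonneg
    have hr : (1 - αγ) * H u = H u - αγ * H u := by ring
    rw [hr]
    linarith [hαu, hsplit.symm.le, hsplit.le]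
  -- Fubini on [a,b]
  have hG_aesm : AEStronglyMeasurable (Function.uncurry fun t s => k t s * W s)
      (μA.prod (volume.restrict (Ioc a b))) := hFjoint.aestronglyMeasurable
  have hG_int : Integrable (Function.uncurry fun t s => k t s * W s)
      (μA.prod (volume.restrict (Ioc a b))) := by
    rw [integrable_prod_iff hG_aesm]
    constructor
    · filter_upwards [hae01] with t ht
      exact (hslice t ht).mono_set hIocab
    · refine ⟨(hFjoint.norm.stronglyMeasurable).integral_prod_right'.aestronglyMeasurable, ?_⟩
      refine HasFiniteIntegral.of_bounded (C := M) ?_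
      filter_upwards [hae01] with t ht
      have h0 : 0 ≤ ∫ s in Ioc a b, ‖k t s * W s‖ :=
        integral_nonneg fun s => norm_nonneg _
      show ‖∫ s, ‖k t s * W s‖ ∂(volume.restrict (Ioc a b))‖ ≤ M
      rw [Real.norm_of_nonneg h0]
      calc (∫ s in Ioc a b, ‖k t s * W s‖)
          ≤ ∫ s in Ioc a b, Cf * (g s * Φ s) := by
            refine integral_mono_of_nonneg (Filter.Eventually.of_forall fun s => norm_nonneg _)
              (hD_intIoc.mono_set hIocab) ?_
            exact ae_restrict_of_ae_restrict_of_subset hIocab (hdom_ae t ht)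
      _ ≤ M := by
            rw [hMdef]
            exact setIntegral_mono_set hD_intIoc hD_nonnegIoc
              (HasSubset.Subset.eventuallyLE hIocab)
  have hswap := integral_integral_swap hG_int
  have hinner_le_J : ∀ t ∈ Icc (0:ℝ) 1,
      (∫ s in Ioc a b, k t s * W s) ≤ J t := by
    intro t ht
    rw [hJdef]
    refine setIntegral_mono_set (hslice t ht) ?_ (HasSubset.Subset.eventuallyLE hIocab)
    filter_upwards [ae_restrict_of_ae_restrict_of_subset hIoc01 hW_nonneg,
      ae_restrict_mem measurableSet_Ioc] with s hW hs
    exact mul_nonneg (hk_nonneg t ht s (hIoc01 hs)) hW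
  -- key pointwise lower bound on W over [a,b]
  have hfW : ∀ᵐ s ∂(volume.restrict (Ioc a b)),
      fb * ρ * g s ≤ W s ∧ 0 ≤ g s ∧ s ∈ Icc (0:ℝ) 1 := by
    filter_upwards [ae_restrict_of_ae_restrict_of_subset hIocab01 hW_eq,
      hg_nonneg_ab,
      ae_restrict_of_ae_restrict_of_subset Ioc_subset_Icc_self hfb,
      ae_restrict_mem measurableSet_Ioc] with s hWe hg hf hs
    have hs01 : s ∈ Icc (0:ℝ) 1 := hIocab01 hs
    have hsab : s ∈ Icc a b := Ioc_subset_Icc_self hs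
    refine ⟨?_, hg, hs01⟩
    rw [hWe]
    calc fb * ρ * g s = g s * (fb * ρ) := by ring
    _ ≤ g s * f s (u s) :=
        mul_le_mul_of_nonneg_left (hf (u s) (hmin_le s hsab) (hu_ub s hs01)) hg
  have key : ∀ Z : ℝ → ℝ, (∀ s ∈ Icc (0:ℝ) 1, 0 ≤ Z s) →
      Integrable (fun s => Z s * W s) (volume.restrict (Ioc a b)) →
      fb * ρ * (∫ s in Ioc a b, Z s * g s) ≤ ∫ s in Ioc a b, Z s * W s := by
    intro Z hZ hint
    have h1 : (∫ s in Ioc a b, fb * ρ * (Z s * g s)) ≤ ∫ s in Ioc a b, Z s * W s := by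
      refine integral_mono_of_nonneg ?_ hint ?_
      · filter_upwards [hfW] with s hs
        exact mul_nonneg hfρ (mul_nonneg (hZ s hs.2.2) hs.2.1)
      · filter_upwards [hfW] with s hs
        calc fb * ρ * (Z s * g s) = Z s * (fb * ρ * g s) := by ring
        _ ≤ Z s * W s := mul_le_mul_of_nonneg_left hs.1 (hZ s hs.2.2)
    rwa [integral_const_mul] at h1
  -- lower bound for H u
  have hKfW_int : Integrable (fun s => (∫ t', k t' s ∂μA) * W s)
      (volume.restrict (Ioc a b)) := by
    refine (hG_int.integral_prod_right).congr (Filter.Eventually.of_forall fun s => ?_)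
    show (∫ x, k x s * W s ∂μA) = (∫ t', k t' s ∂μA) * W s
    exact integral_mul_const _ _
  have hKW_eq : (∫ s in Ioc a b, ∫ t, k t s * W s ∂μA)
      = ∫ s in Ioc a b, (∫ t', k t' s ∂μA) * W s := by
    refine integral_congr_ae (Filter.Eventually.of_forall fun s => ?_)
    show (∫ x, k x s * W s ∂μA) = (∫ t', k t' s ∂μA) * W s
    exact integral_mul_const _ _
  have hS1' : S1 = ∫ s in Ioc a b, (∫ t', k t' s ∂μA) * g s := by
    rw [hS1def, intervalIntegral.integral_of_le hab]
  have hHu_lb : fb * ρ * S1 ≤ (1 - αγ) * H u := by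
    calc fb * ρ * S1 = fb * ρ * ∫ s in Ioc a b, (∫ t', k t' s ∂μA) * g s := by rw [hS1']
    _ ≤ ∫ s in Ioc a b, (∫ t', k t' s ∂μA) * W s := key _ hKf_nonneg hKfW_int
    _ = ∫ s in Ioc a b, ∫ t, k t s * W s ∂μA := hKW_eq.symm
    _ = ∫ t, (∫ s in Ioc a b, k t s * W s) ∂μA := hswap.symm
    _ ≤ ∫ t, J t ∂μA := by
        refine integral_mono_ae hG_int.integral_prod_left hJ_int ?_
        filter_upwards [hae01] with t ht
        exact hinner_le_J t ht
    _ ≤ (1 - αγ) * H u := hJint_le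
  have hHu_lb' : fb * ρ * S1 / (1 - αγ) ≤ H u := by
    rw [div_le_iff₀ h1αγ, mul_comm (H u)]
    exact hHu_lb
  -- pointwise lower bound for u on [a,b]
  have hpoint : ∀ t ∈ Icc a b, fb * ρ * sInf Eimg ≤ u t := by
    intro t ht
    have ht01 : t ∈ Icc (0:ℝ) 1 := hab01 ht
    have hJt : fb * ρ * (∫ s in Ioc a b, k t s * g s) ≤ J t := by
      calc fb * ρ * (∫ s in Ioc a b, k t s * g s) ≤ ∫ s in Ioc a b, k t s * W s :=
            key _ (fun s hs => hk_nonneg t ht01 s hs) ((hslice t ht01).mono_set hIocab)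
      _ ≤ J t := hinner_le_J t ht01
    have hBt : (∫ s in a..b, k t s * g s) = ∫ s in Ioc a b, k t s * g s :=
      intervalIntegral.integral_of_le hab
    have hγt : γ t * (fb * ρ * S1 / (1 - αγ)) ≤ γ t * H u :=
      mul_le_mul_of_nonneg_left hHu_lb' (hγ_nonneg t ht01)
    have hexpr : fb * ρ * (γ t / (1 - αγ) * S1 + ∫ s in a..b, k t s * g s)
        = γ t * (fb * ρ * S1 / (1 - αγ)) + fb * ρ * (∫ s in Ioc a b, k t s * g s) := by
      rw [hBt]; ring
    have hsinf_le : sInf Eimg ≤ γ t / (1 - αγ) * S1 + ∫ s in a..b, k t s * g s :=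
      csInf_le ⟨0, fun x hx => hEimg_lb x hx⟩ (mem_image_of_mem _ ht)
    have h1 : fb * ρ * sInf Eimg
        ≤ fb * ρ * (γ t / (1 - αγ) * S1 + ∫ s in a..b, k t s * g s) :=
      mul_le_mul_of_nonneg_left hsinf_le hfρ
    have h2 := heq' t ht01
    rw [hexpr] at h1
    linarith [hγt, hJt]
  -- contradiction
  have h1 : fb * ρ * sInf Eimg ≤ minOnAB u a b := by
    rw [minOnAB]
    refine le_csInf (Nonempty.image _ ⟨a, left_mem_Icc.mpr hab⟩) ?_
    rintro x ⟨t, ht, rfl⟩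
    exact hpoint t ht
  have h2 : ρ < fb * ρ * sInf Eimg := by
    nlinarith [mul_pos hρ (sub_pos.mpr hsinf)]
  rw [hmin] at h1
  linarith
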